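/- The quotient of the 2-torus Circle × Circle by the equivalence relation identifying (z₁, z₂) with (z₁⁻¹, z₂⁻¹), equipped with the quotient topology, is homeomorphic to the unit sphere in EuclideanSpace ℝ (Fin 3). -/

import Mathlib

set_option maxHeartbeats 1000000

/-- The 2-torus, the product of two copies of the unit circle in `ℂ`. -/
abbrev T2 : Type := Circle × Circle

/-- The involution `(z₁, z₂) ↦ (z₁⁻¹, z₂⁻¹)` on the 2-torus, i.e. complex conjugation
in each factor. -/
noncomputable def torus2Inv : T2 → T2 := fun p => (p.1⁻¹, p.2⁻¹)


noncomputable def gmap (p : T2) : EuclideanSpace ℝ (Fin 3) :=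
  (WithLp.equiv 2 (Fin 3 → ℝ)).symm ![(p.1 : ℂ).re, (p.2 : ℂ).re, (p.1 : ℂ).im * (p.2 : ℂ).im]

lemma gmap0 (p : T2) : gmap p 0 = (p.1 : ℂ).re := rfl
lemma gmap1 (p : T2) : gmap p 1 = (p.2 : ℂ).re := rfl
lemma gmap2 (p : T2) : gmap p 2 = (p.1 : ℂ).im * (p.2 : ℂ).im := rfl

lemma circle_sq (z : Circle) : (z : ℂ).re ^ 2 + (z : ℂ).im ^ 2 = 1 := by
  have := Circle.normSq_coe z
  rw [Complex.normSq_apply] at this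
  nlinarith [this]

lemma continuous_gmap : Continuous gmap := by
  apply (PiLp.continuous_toLp 2 (fun _ : Fin 3 => ℝ)).comp
  apply continuous_pi
  intro i
  fin_cases i
  · exact Complex.continuous_re.comp (continuous_subtype_val.comp continuous_fst)
  · exact Complex.continuous_re.comp (continuous_subtype_val.comp continuous_snd)
  · exact (Complex.continuous_im.comp (continuous_subtype_val.comp continuous_fst)).mul
      (Complex.continuous_im.comp (continuous_subtype_val.comp continuous_snd))

lemma gmap_ne_zero (p : T2) : gmap p ≠ 0 := by
  intro h
  have h0 : (p.1 : ℂ).re = 0 := by rw [← gmap0 p, h]; rfl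
  have h1 : (p.2 : ℂ).re = 0 := by rw [← gmap1 p, h]; rfl
  have h2 : (p.1 : ℂ).im * (p.2 : ℂ).im = 0 := by rw [← gmap2 p, h]; rfl
  have c1 := circle_sq p.1
  have c2 := circle_sq p.2
  nlinarith [sq_nonneg ((p.1:ℂ).im), sq_nonneg ((p.2:ℂ).im)]

lemma gmap_inv (p : T2) : gmap (torus2Inv p) = gmap p := by
  have e1 : ((torus2Inv p).1 : ℂ) = starRingEnd ℂ (p.1 : ℂ) := Circle.coe_inv_eq_conj p.1
  have e2 : ((torus2Inv p).2 : ℂ) = starRingEnd ℂ (p.2 : ℂ) := Circle.coe_inv_eq_conj p.2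
  unfold gmap
  rw [e1, e2]
  simp [Complex.conj_re, Complex.conj_im]

lemma mu_eq_one {x y w μ : ℝ} (hμ : 0 < μ)
    (hp : w ^ 2 = (1 - x ^ 2) * (1 - y ^ 2))
    (hq : (μ * w) ^ 2 = (1 - (μ * x) ^ 2) * (1 - (μ * y) ^ 2))
    (hx : x ^ 2 ≤ 1) (hy : y ^ 2 ≤ 1)
    (hx' : (μ * x) ^ 2 ≤ 1) (hy' : (μ * y) ^ 2 ≤ 1) : μ = 1 := by
  have key : (μ ^ 2 - 1) * (1 - μ ^ 2 * x ^ 2 * y ^ 2) = 0 := by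
    linear_combination hq - μ ^ 2 * hp
  have hμ2 : μ ^ 2 = 1 := by
    rcases mul_eq_zero.1 key with h | h
    · linarith
    · -- μ² x² y² = 1
      have h1 : μ ^ 2 * x ^ 2 * y ^ 2 = 1 := by linarith
      have hyy : y ^ 2 = 1 := by nlinarith [sq_nonneg (μ * x), sq_nonneg y]
      have hxx : μ ^ 2 * x ^ 2 = 1 := by nlinarith
      have hle : μ ^ 2 ≤ 1 := by nlinarith [sq_nonneg μ]
      have hge : 1 ≤ μ ^ 2 := by nlinarith [sq_nonneg μ]
      linarith
  have : (μ - 1) * (μ + 1) = 0 := by linear_combination hμ2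
  rcases mul_eq_zero.1 this with h | h
  · linarith
  · linarith

noncomputable def Fmap (p : T2) : Metric.sphere (0 : EuclideanSpace ℝ (Fin 3)) 1 :=
  ⟨‖gmap p‖⁻¹ • gmap p, by
    rw [mem_sphere_zero_iff_norm, norm_smul, norm_inv, norm_norm,
      inv_mul_cancel₀ (norm_ne_zero_iff.2 (gmap_ne_zero p))]⟩

lemma continuous_Fmap : Continuous Fmap := by
  apply Continuous.subtype_mk
  exact ((continuous_gmap.norm).inv₀
    (fun p => norm_ne_zero_iff.2 (gmap_ne_zero p))).smul continuous_gmap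

lemma Fmap_inv (p : T2) : Fmap (torus2Inv p) = Fmap p := by
  unfold Fmap
  simp [gmap_inv]

-- same orbit from equal invariants
lemma orbit_of_gmap_eq (p q : T2) (h : gmap p = gmap q) :
    Quot.mk (fun a b : T2 => torus2Inv a = b) p = Quot.mk (fun a b : T2 => torus2Inv a = b) q := by
  have hre1 : (p.1 : ℂ).re = (q.1 : ℂ).re := by rw [← gmap0 p, ← gmap0 q, h]
  have hre2 : (p.2 : ℂ).re = (q.2 : ℂ).re := by rw [← gmap1 p, ← gmap1 q, h]
  have him : (p.1 : ℂ).im * (p.2 : ℂ).im = (q.1 : ℂ).im * (q.2 : ℂ).im := by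
    rw [← gmap2 p, ← gmap2 q, h]
  have c1p := circle_sq p.1; have c1q := circle_sq q.1
  have c2p := circle_sq p.2; have c2q := circle_sq q.2
  have him1 : (q.1 : ℂ).im = (p.1 : ℂ).im ∨ (q.1 : ℂ).im = -(p.1 : ℂ).im := by
    have : ((q.1:ℂ).im - (p.1:ℂ).im) * ((q.1:ℂ).im + (p.1:ℂ).im) = 0 := by
      linear_combination c1q - c1p + ((p.1:ℂ).re + (q.1:ℂ).re) * hre1
    rcases mul_eq_zero.1 this with h' | h'
    · left; linarith
    · right; linarith
  have him2 : (q.2 : ℂ).im = (p.2 : ℂ).im ∨ (q.2 : ℂ).im = -(p.2 : ℂ).im := by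
    have : ((q.2:ℂ).im - (p.2:ℂ).im) * ((q.2:ℂ).im + (p.2:ℂ).im) = 0 := by
      linear_combination c2q - c2p + ((p.2:ℂ).re + (q.2:ℂ).re) * hre2
    rcases mul_eq_zero.1 this with h' | h'
    · left; linarith
    · right; linarith
  -- helpers
  have heq1 : ∀ (z w : Circle), (z:ℂ).re = (w:ℂ).re → (z:ℂ).im = (w:ℂ).im → z = w := by
    intro z w h1 h2
    exact Circle.ext (Complex.ext h1 h2)
  have hconj : ∀ (z w : Circle), (z:ℂ).re = (w:ℂ).re → (w:ℂ).im = -(z:ℂ).im → z⁻¹ = w := by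
    intro z w h1 h2
    apply Circle.ext
    rw [Circle.coe_inv_eq_conj]
    exact Complex.ext (by simp [h1]) (by simp [h2])
  have key : q = p ∨ q = torus2Inv p := by
    rcases him1 with h1 | h1 <;> rcases him2 with h2 | h2
    · left; exact Prod.ext (heq1 q.1 p.1 hre1.symm h1) (heq1 q.2 p.2 hre2.symm h2)
    · -- im q1 = im p1, im q2 = -im p2 : then im p1 * im p2 = -(im p1 * im p2)
      have hz : (p.1:ℂ).im * (p.2:ℂ).im = 0 := by
        rw [h1, h2] at him; nlinarith [him]
      rcases mul_eq_zero.1 hz with h0 | h0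
      · right
        exact ((Prod.ext (hconj p.1 q.1 hre1 (by rw [h1, h0]; ring))
          (hconj p.2 q.2 hre2 h2) : torus2Inv p = q)).symm
      · left
        exact Prod.ext (heq1 q.1 p.1 hre1.symm h1)
          (heq1 q.2 p.2 hre2.symm (by rw [h2, h0]; ring))
    · have hz : (p.1:ℂ).im * (p.2:ℂ).im = 0 := by
        rw [h1, h2] at him; nlinarith [him]
      rcases mul_eq_zero.1 hz with h0 | h0
      · left
        exact Prod.ext (heq1 q.1 p.1 hre1.symm (by rw [h1, h0]; ring))
          (heq1 q.2 p.2 hre2.symm h2)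
      · right
        exact ((Prod.ext (hconj p.1 q.1 hre1 h1)
          (hconj p.2 q.2 hre2 (by rw [h2, h0]; ring)) : torus2Inv p = q)).symm
    · right
      exact ((Prod.ext (hconj p.1 q.1 hre1 h1)
        (hconj p.2 q.2 hre2 h2) : torus2Inv p = q)).symm
  rcases key with rfl | rfl
  · rfl
  · exact Quot.sound rfl

lemma pillow_eq (p : T2) :
    (gmap p 2) ^ 2 = (1 - (gmap p 0) ^ 2) * (1 - (gmap p 1) ^ 2) := by
  rw [gmap0, gmap1, gmap2]
  have c1 := circle_sq p.1; have c2 := circle_sq p.2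
  nlinarith [c1, c2]

lemma pillow_le0 (p : T2) : (gmap p 0) ^ 2 ≤ 1 := by
  rw [gmap0]; nlinarith [circle_sq p.1, sq_nonneg (p.1 : ℂ).im]

lemma pillow_le1 (p : T2) : (gmap p 1) ^ 2 ≤ 1 := by
  rw [gmap1]; nlinarith [circle_sq p.2, sq_nonneg (p.2 : ℂ).im]

lemma gmap_eq_of_Fmap_eq (p q : T2) (h : Fmap p = Fmap q) : gmap p = gmap q := by
  have hval : ‖gmap p‖⁻¹ • gmap p = ‖gmap q‖⁻¹ • gmap q := congrArg Subtype.val h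
  have hnp0 : 0 < ‖gmap p‖ := norm_pos_iff.2 (gmap_ne_zero p)
  have hnq0 : 0 < ‖gmap q‖ := norm_pos_iff.2 (gmap_ne_zero q)
  set np := ‖gmap p‖
  set nq := ‖gmap q‖
  set μ := nq / np with hμdef
  have hμ : 0 < μ := div_pos hnq0 hnp0
  have hcomp : ∀ i, gmap q i = μ * gmap p i := by
    intro i
    have h2 := congrArg (fun f : EuclideanSpace ℝ (Fin 3) => f i) hval
    simp only [PiLp.smul_apply, smul_eq_mul] at h2
    rw [hμdef]
    field_simp at h2 ⊢
    linarith [h2]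
  have hqeq := pillow_eq q
  rw [hcomp 0, hcomp 1, hcomp 2] at hqeq
  have hq0 := pillow_le0 q; rw [hcomp 0] at hq0
  have hq1 := pillow_le1 q; rw [hcomp 1] at hq1
  have hμ1 : μ = 1 :=
    mu_eq_one hμ (pillow_eq p) hqeq (pillow_le0 p) (pillow_le1 p) hq0 hq1
  ext i
  rw [hcomp i, hμ1, one_mul]

/-- Construct a circle point with given real part and imaginary part. -/
noncomputable def circleMk (x y : ℝ) (h : x ^ 2 + y ^ 2 = 1) : Circle :=
  ⟨⟨x, y⟩, by
    have hm : (⟨x, y⟩ : ℂ) ∈ Metric.sphere (0 : ℂ) 1 := by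
      rw [mem_sphere_zero_iff_norm, Complex.norm_def, Complex.normSq_mk,
        show x * x + y * y = 1 by nlinarith]
      exact Real.sqrt_one
    simpa [Submonoid.unitSphere] using hm⟩

@[simp] lemma circleMk_re (x y : ℝ) (h) : ((circleMk x y h : Circle) : ℂ).re = x := rfl
@[simp] lemma circleMk_im (x y : ℝ) (h) : ((circleMk x y h : Circle) : ℂ).im = y := rfl

lemma exists_point (a b c : ℝ) (habc : a ^ 2 + b ^ 2 + c ^ 2 = 1) :
    ∃ (p : T2) (t : ℝ), 0 < t ∧ (p.1 : ℂ).re = t * a ∧ (p.2 : ℂ).re = t * b ∧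
      (p.1 : ℂ).im * (p.2 : ℂ).im = t * c := by
  have hu4 : 4 * (a ^ 2 * b ^ 2) ≤ 1 := by nlinarith [sq_nonneg (a^2 - b^2), sq_nonneg c]
  set R := Real.sqrt (1 - 4 * (a ^ 2 * b ^ 2)) with hR
  have hR0 : 0 ≤ R := Real.sqrt_nonneg _
  have hR2 : R ^ 2 = 1 - 4 * (a ^ 2 * b ^ 2) := Real.sq_sqrt (by linarith)
  have h1R : (0:ℝ) < 1 + R := by linarith
  set s := 2 / (1 + R) with hs
  have hs0 : 0 < s := by positivity
  have hsR : s * (1 + R) = 2 := by rw [hs, div_mul_cancel₀ _ h1R.ne']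
  have hseq : (a ^ 2 * b ^ 2) * s ^ 2 - s + 1 = 0 := by
    have hsr : s * R = 2 - s := by linarith [hsR]
    nlinarith [hsr, hR2, sq_nonneg s]
  have hsa : s * a ^ 2 ≤ 1 := by
    have hra : 2 * a ^ 2 - 1 ≤ R := by
      rcases le_or_gt (2 * a ^ 2 - 1) 0 with h' | h'
      · linarith
      · have : (2 * a ^ 2 - 1) ^ 2 ≤ 1 - 4 * (a ^ 2 * b ^ 2) := by
          nlinarith [sq_nonneg a, sq_nonneg c]
        nlinarith [hR2, hR0]
    rw [hs, div_mul_eq_mul_div, div_le_one h1R]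
    linarith
  have hsb : s * b ^ 2 ≤ 1 := by
    have hrb : 2 * b ^ 2 - 1 ≤ R := by
      rcases le_or_gt (2 * b ^ 2 - 1) 0 with h' | h'
      · linarith
      · have : (2 * b ^ 2 - 1) ^ 2 ≤ 1 - 4 * (a ^ 2 * b ^ 2) := by
          nlinarith [sq_nonneg b, sq_nonneg c]
        nlinarith [hR2, hR0]
    rw [hs, div_mul_eq_mul_div, div_le_one h1R]
    linarith
  set t := Real.sqrt s with htdef
  have ht0 : 0 < t := Real.sqrt_pos.2 hs0
  have ht2 : t ^ 2 = s := Real.sq_sqrt hs0.le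
  set x := t * a with hx
  set y := t * b with hy
  set w := t * c with hw
  have hx2 : x ^ 2 ≤ 1 := by
    have : x ^ 2 = s * a ^ 2 := by rw [hx, ← ht2]; ring
    linarith [this ▸ hsa]
  have hy2 : y ^ 2 ≤ 1 := by
    have : y ^ 2 = s * b ^ 2 := by rw [hy, ← ht2]; ring
    linarith [this ▸ hsb]
  have hweq : w ^ 2 = (1 - x ^ 2) * (1 - y ^ 2) := by
    have e1 : x ^ 2 = s * a ^ 2 := by rw [hx, ← ht2]; ring
    have e2 : y ^ 2 = s * b ^ 2 := by rw [hy, ← ht2]; ring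
    have e3 : w ^ 2 = s * c ^ 2 := by rw [hw, ← ht2]; ring
    rw [e1, e2, e3]
    nlinarith [hseq, habc]
  have hd0 : (0:ℝ) ≤ 1 - x ^ 2 := by linarith
  set d := Real.sqrt (1 - x ^ 2) with hd
  have hd2 : d ^ 2 = 1 - x ^ 2 := Real.sq_sqrt hd0
  have hz1mem : x ^ 2 + d ^ 2 = 1 := by rw [hd2]; ring
  set β : ℝ := if 1 - x ^ 2 = 0 then Real.sqrt (1 - y ^ 2) else w / d with hβ
  have hz2mem : y ^ 2 + β ^ 2 = 1 := by
    rw [hβ]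
    split_ifs with hcase
    · rw [Real.sq_sqrt (by linarith : (0:ℝ) ≤ 1 - y ^ 2)]; ring
    · have hdne : d ≠ 0 := fun h0 => hcase (by rw [h0] at hd2; simpa using hd2.symm)
      rw [div_pow, hweq, hd2]
      field_simp
      ring
  have hdβ : d * β = w := by
    rw [hβ]
    split_ifs with hcase
    · have hdz : d = 0 := by rw [hd, hcase, Real.sqrt_zero]
      have hwz : w = 0 := by nlinarith [hweq, hcase]
      rw [hdz, hwz, zero_mul]
    · have hdne : d ≠ 0 := fun h0 => hcase (by rw [h0] at hd2; simpa using hd2.symm)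
      field_simp
  exact ⟨(circleMk x d hz1mem, circleMk y β hz2mem), t, ht0, rfl, rfl, by
    show d * β = t * c
    rw [hdβ, hw]⟩

lemma Fmap_surjective : Function.Surjective Fmap := by
  rintro ⟨v, hv⟩
  rw [mem_sphere_zero_iff_norm] at hv
  have habc : (v 0) ^ 2 + (v 1) ^ 2 + (v 2) ^ 2 = 1 := by
    have h1 : Real.sqrt (∑ i, ‖v i‖ ^ 2) = 1 := by rw [← EuclideanSpace.norm_eq, hv]
    have h2 : (∑ i, ‖v i‖ ^ 2) = 1 := Real.sqrt_eq_one.1 h1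
    simpa [Fin.sum_univ_three, Real.norm_eq_abs, sq_abs] using h2
  obtain ⟨p, t, ht0, h0, h1, h2⟩ := exists_point (v 0) (v 1) (v 2) habc
  have hgp : gmap p = t • v := by
    ext i
    fin_cases i
    · show gmap p 0 = (t • v) 0
      rw [gmap0, PiLp.smul_apply, smul_eq_mul]; exact h0
    · show gmap p 1 = (t • v) 1
      rw [gmap1, PiLp.smul_apply, smul_eq_mul]; exact h1
    · show gmap p 2 = (t • v) 2
      rw [gmap2, PiLp.smul_apply, smul_eq_mul]; exact h2
  refine ⟨p, ?_⟩
  apply Subtype.ext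
  show ‖gmap p‖⁻¹ • gmap p = v
  rw [hgp, norm_smul, hv, Real.norm_eq_abs, abs_of_pos ht0, mul_one, smul_smul,
    inv_mul_cancel₀ ht0.ne', one_smul]

/-- The quotient of the 2-torus by the involution `(z₁, z₂) ↦ (z₁⁻¹, z₂⁻¹)`, with the
quotient topology, is homeomorphic to the unit 2-sphere. -/
theorem torus2_quotient_homeomorphic_sphere :
    Nonempty (Quot (fun p q : T2 => torus2Inv p = q) ≃ₜ
      (Metric.sphere (0 : EuclideanSpace ℝ (Fin 3)) 1)) := by
  have hF : ∀ p q : T2, torus2Inv p = q → Fmap p = Fmap q := by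
    rintro p q rfl; exact (Fmap_inv p).symm
  let f : Quot (fun p q : T2 => torus2Inv p = q) →
      Metric.sphere (0 : EuclideanSpace ℝ (Fin 3)) 1 := Quot.lift Fmap hF
  have hcont : Continuous f := continuous_quot_lift hF continuous_Fmap
  have hinj : Function.Injective f := by
    intro x y
    induction x using Quot.ind with | _ p => ?_
    induction y using Quot.ind with | _ q => ?_
    intro h
    exact orbit_of_gmap_eq p q (gmap_eq_of_Fmap_eq p q h)
  have hsurj : Function.Surjective f := by
    intro v
    obtain ⟨p, hp⟩ := Fmap_surjective v
    exact ⟨Quot.mk _ p, hp⟩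
  exact ⟨Continuous.homeoOfEquivCompactToT2 (f := Equiv.ofBijective f ⟨hinj, hsurj⟩) hcont⟩
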